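/- Let F be a finite field with q = Fintype.card F elements, let n ≥ 1 divide q − 1, and let H be the kernel of the n-th power homomorphism on the unit group Fˣ (so H is the group μ_n of n-th roots of unity in F). Let Q = Fˣ ⧸ H and let s : Q → Fˣ be a section of the quotient map (∀ c, the class of s c equals c). Then for every a ∈ Fˣ, the product over all c ∈ Q of the 'monomial entries' (a · s c) · (s (class of (a · s c)))⁻¹ — each of which lies in H — equals the n-th power residue symbol a^{(q−1)/n}: ∏_{c : Q} (a · s c) · (s (↑(a · s c)))⁻¹ = a ^ ((q − 1) / n). -/

import Mathlib

/-- The power residue symbol equals the determinant: let `F` be a finite field with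
`q` elements, `n ∣ q - 1`, and `H = μ_n` the kernel of the `n`-th power map on `Fˣ`.
Pick a section `s` of `Fˣ → Fˣ ⧸ H` (a basis of `F` as an `F₁ⁿ`-vector space). For
`a ∈ Fˣ`, multiplication by `a` sends the basis vector `s c` to `a · s c`, whose
monomial entry `(a · s c) · (s (class of (a · s c)))⁻¹` lies in `H = μ_n`; the
product of these entries (the determinant of multiplication by `a`) equals the
`n`-th power residue symbol `a^{(q-1)/n}`. -/
theorem power_residue_symbol_eq_det (F : Type*) [Field F] [Fintype F] (n : ℕ)
    (hn : 1 ≤ n) (hdvd : n ∣ Fintype.card F - 1)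
    (H : Subgroup Fˣ) (hH : H = (powMonoidHom n : Fˣ →* Fˣ).ker)
    (s : Fˣ ⧸ H → Fˣ) (hs : ∀ c : Fˣ ⧸ H, (QuotientGroup.mk (s c) : Fˣ ⧸ H) = c)
    (a : Fˣ) :
    (∀ c : Fˣ ⧸ H, (a * s c) * (s (QuotientGroup.mk (a * s c)))⁻¹ ∈ H) ∧
    ∏ᶠ c : Fˣ ⧸ H, (a * s c) * (s (QuotientGroup.mk (a * s c)))⁻¹
      = a ^ ((Fintype.card F - 1) / n) := by
  classical
  have hmem : ∀ c : Fˣ ⧸ H, (a * s c) * (s (QuotientGroup.mk (a * s c)))⁻¹ ∈ H := by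
    intro c
    rw [← QuotientGroup.eq_one_iff]
    simp [hs]
  refine ⟨hmem, ?_⟩
  have hFq : 0 < Fintype.card F - 1 := by
    have := Fintype.one_lt_card_iff_nontrivial (α := F) |>.2 inferInstance
    omega
  have hn0 : n ≠ 0 := by omega
  have : NeZero n := ⟨hn0⟩
  -- H is the group of n-th roots of unity
  have hHroots : H = rootsOfUnity n F := by
    ext x
    rw [hH, MonoidHom.mem_ker, mem_rootsOfUnity, powMonoidHom_apply]
  -- card of H is n
  obtain ⟨g, hg⟩ := IsCyclic.exists_generator (α := Fˣ)
  have hord : orderOf g = Fintype.card F - 1 := by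
    rw [orderOf_eq_card_of_forall_mem_zpowers hg, Nat.card_eq_fintype_card, Fintype.card_units]
  have hprim : IsPrimitiveRoot (g ^ ((Fintype.card F - 1) / n)) n := by
    have h1 : orderOf (g ^ ((Fintype.card F - 1) / n)) = n := by
      rw [orderOf_pow, hord, Nat.gcd_eq_right (Nat.div_dvd_of_dvd hdvd),
        Nat.div_div_self hdvd (by omega)]
    have h2 := IsPrimitiveRoot.orderOf (g ^ ((Fintype.card F - 1) / n))
    rwa [h1] at h2
  have hcardH : Nat.card H = n := by
    rw [hHroots]
    have := hprim.card_rootsOfUnity'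
    rw [Nat.card_eq_fintype_card]
    convert this
    exact Fintype.card_eq_nat_card
  have : Fintype (Fˣ ⧸ H) := Fintype.ofFinite _
  have hcardQ : Fintype.card (Fˣ ⧸ H) = (Fintype.card F - 1) / n := by
    have := Subgroup.card_eq_card_quotient_mul_card_subgroup (s := H)
    rw [Nat.card_eq_fintype_card] at hcardH
    rw [Nat.card_eq_fintype_card (α := Fˣ ⧸ H), Nat.card_eq_fintype_card (α := H)] at this
    rw [Nat.card_eq_fintype_card (α := Fˣ), Fintype.card_units] at this
    rw [this, hcardH, Nat.mul_div_cancel _ (by omega : 0 < n)]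
  have key : ∀ c : Fˣ ⧸ H, (QuotientGroup.mk (a * s c) : Fˣ ⧸ H)
      = QuotientGroup.mk a * c := by
    intro c
    rw [QuotientGroup.mk_mul, hs]
  rw [finprod_eq_prod_of_fintype]
  simp only [key]
  rw [Finset.prod_mul_distrib, Finset.prod_mul_distrib, Finset.prod_const,
    Finset.card_univ, hcardQ]
  have hperm : ∏ c : Fˣ ⧸ H, (s (QuotientGroup.mk a * c))⁻¹
      = ∏ c : Fˣ ⧸ H, (s c)⁻¹ := by
    exact Equiv.prod_comp (Equiv.mulLeft (QuotientGroup.mk a : Fˣ ⧸ H))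
      (fun c => (s c)⁻¹)
  rw [hperm, Finset.prod_inv_distrib, mul_assoc, mul_inv_cancel, mul_one]
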